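/- Let p ≥ 2 and let b ∈ ℚ^{p+1} be a vector such that for every (p+1)/2-element subset I of {1,...,p+1} (where p is odd), Σ_{i∈I} b_i ∈ {0,1}, and suppose Σ_{i∈I} b_i = 1 and Σ_{i∉I} b_i = 1 for some such subset I and its complement. Then b is the constant vector with all entries 2/(p+1). -/

import Mathlib

theorem stmt_15 (p : ℕ) (hp : 2 ≤ p) (hodd : Odd p)
    (b : Fin (p + 1) → ℚ)
    (hb : ∀ I : Finset (Fin (p + 1)), I.card = (p + 1) / 2 →
      ∑ i ∈ I, b i = 0 ∨ ∑ i ∈ I, b i = 1)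
    (I : Finset (Fin (p + 1))) (hI : I.card = (p + 1) / 2)
    (hI1 : ∑ i ∈ I, b i = 1) (hIc1 : ∑ i ∈ Iᶜ, b i = 1) :
    ∀ i, b i = 2 / ((p : ℚ) + 1) := by
  obtain ⟨k, hk⟩ := hodd
  have hhalf : (p + 1) / 2 = k + 1 := by omega
  have hsum2 : ∑ i, b i = 2 := by
    rw [← Finset.sum_add_sum_compl I, hI1, hIc1]; norm_num
  have hcompl : ∀ J : Finset (Fin (p + 1)), J.card = (p + 1) / 2 →
      Jᶜ.card = (p + 1) / 2 := by
    intro J hJ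
    have := Finset.card_compl J
    simp only [Fintype.card_fin] at this
    omega
  have hall : ∀ J : Finset (Fin (p + 1)), J.card = (p + 1) / 2 →
      ∑ i ∈ J, b i = 1 := by
    intro J hJ
    have hsplit : ∑ i ∈ J, b i + ∑ i ∈ Jᶜ, b i = 2 := by
      rw [Finset.sum_add_sum_compl]; exact hsum2
    rcases hb J hJ with h | h
    · rcases hb Jᶜ (hcompl J hJ) with h' | h' <;> rw [h, h'] at hsplit <;> norm_num at hsplit
    · exact h
  have hconst : ∀ i j : Fin (p + 1), b i = b j := by
    intro i j
    by_cases hij : i = j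
    · rw [hij]
    · have hcard : k ≤ ((Finset.univ : Finset (Fin (p + 1))) \ {i, j}).card := by
        rw [Finset.card_sdiff_of_subset (by simp)]
        rw [Finset.card_insert_of_notMem (by simpa using hij)]
        simp only [Finset.card_singleton, Finset.card_univ, Fintype.card_fin]
        omega
      obtain ⟨K, hKsub, hKcard⟩ := Finset.exists_subset_card_eq hcard
      have hiK : i ∉ K := fun h => by
        have := hKsub h; simp at this
      have hjK : j ∉ K := fun h => by
        have := hKsub h; simp at this
      have h1 : ∑ x ∈ insert i K, b x = 1 := by
        apply hall
        rw [Finset.card_insert_of_notMem hiK, hKcard, hhalf]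
      have h2 : ∑ x ∈ insert j K, b x = 1 := by
        apply hall
        rw [Finset.card_insert_of_notMem hjK, hKcard, hhalf]
      rw [Finset.sum_insert hiK] at h1
      rw [Finset.sum_insert hjK] at h2
      linarith
  intro i
  have hIi : ∑ x ∈ I, b x = I.card • b i := by
    rw [← Finset.sum_const]
    exact Finset.sum_congr rfl fun x _ => hconst x i
  rw [hI1, hI, hhalf] at hIi
  have hcast : ((k : ℚ) + 1) * b i = 1 := by
    rw [nsmul_eq_mul] at hIi
    push_cast at hIi
    linarith
  have hp1 : ((p : ℚ) + 1) = 2 * ((k : ℚ) + 1) := by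
    have : (p : ℚ) = 2 * k + 1 := by exact_mod_cast congrArg (Nat.cast : ℕ → ℚ) hk
    linarith
  rw [hp1]
  have hk1 : ((k : ℚ) + 1) ≠ 0 := by positivity
  field_simp
  linarith
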